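/- arXiv:1406.2985 — 5 statements merged into one kernel-verified Lean document; each statement's English description precedes it below -/
import Mathlib

section
/- Let S ⊆ ℤ^{n+1} be a finitely generated submonoid and q = (q_{ij})_{0≤i,j≤n} a multiplicatively skew-symmetric matrix with entries in kˣ. Regard the monoid algebra k[S] as a ℤ^{n+1}-graded k-algebra with homogeneous components k·X^s for s ∈ S and 0 otherwise. Then there exists a left twisting system τ = {τ_u : u ∈ ℤ^{n+1}} on k[S] over ℤ^{n+1} such that the associated twisted product satisfies X^s ∘ X^t = β_q(s,t)·X^{s+t} for all s,t ∈ S; that is, the twisted algebra ᵗ(k[S]) is the twisted semigroup algebra k_q[S]. -/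
/-- The 2-cocycle `β_q(s,t) = ∏_{0 ≤ j < i ≤ n} q_{ij}^{s_i t_j}` on `ℤ^{n+1}` determined
by a matrix `q` with entries in `kˣ`. -/
def betaq {k : Type*} [Field k] {n : ℕ} (q : Fin (n + 1) → Fin (n + 1) → kˣ)
    (s t : Fin (n + 1) → ℤ) : kˣ :=
  ∏ i : Fin (n + 1), ∏ j : Fin (n + 1),
    if (j : ℕ) < (i : ℕ) then q i j ^ (s i * t j) else 1


section Aux

variable {k : Type*} [Field k] {n : ℕ} {S : AddSubmonoid (Fin (n + 1) → ℤ)}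

/-- Pointwise scaling of a monoid algebra element by a unit-valued function. -/
def scaleF (c : ↥S → kˣ) (a : AddMonoidAlgebra k ↥S) : AddMonoidAlgebra k ↥S :=
  ⟨⟨a.coeff.support, fun s => (c s : k) * a.coeff s, fun s => by
    simp [Finsupp.mem_support_iff]⟩⟩

@[simp] lemma scaleF_apply (c : ↥S → kˣ) (a : AddMonoidAlgebra k ↥S) (s : ↥S) :
    (scaleF c a).coeff s = (c s : k) * a.coeff s := rfl

@[simp] lemma scaleF_support (c : ↥S → kˣ) (a : AddMonoidAlgebra k ↥S) :
    (scaleF c a).coeff.support = a.coeff.support := rfl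

lemma scaleF_single (c : ↥S → kˣ) (t : ↥S) (v : k) :
    scaleF c (AddMonoidAlgebra.single t v) = AddMonoidAlgebra.single t ((c t : k) * v) := by
  ext s
  by_cases h : t = s <;>
    simp [AddMonoidAlgebra.coeff_single, Finsupp.single_apply, h]

lemma scaleF_add (c : ↥S → kˣ) (a b : AddMonoidAlgebra k ↥S) :
    scaleF c (a + b) = scaleF c a + scaleF c b := by
  ext s
  rw [scaleF_apply, AddMonoidAlgebra.coeff_add, Finsupp.add_apply, AddMonoidAlgebra.coeff_add,
    Finsupp.add_apply, scaleF_apply, scaleF_apply, mul_add]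

/-- Pointwise scaling as a linear equivalence. -/
def scaleE (c : ↥S → kˣ) : AddMonoidAlgebra k ↥S ≃ₗ[k] AddMonoidAlgebra k ↥S where
  toFun := scaleF c
  invFun := scaleF (fun s => (c s)⁻¹)
  map_add' := scaleF_add c
  map_smul' r a := by
    ext s
    rw [scaleF_apply, AddMonoidAlgebra.coeff_smul, Finsupp.smul_apply, AddMonoidAlgebra.coeff_smul,
      Finsupp.smul_apply, scaleF_apply, RingHom.id_apply,
      mul_smul_comm]
  left_inv a := by ext s; simp [Units.inv_mul_cancel_left]
  right_inv a := by ext s; simp [Units.mul_inv_cancel_left]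

@[simp] lemma scaleE_apply (c : ↥S → kˣ) (a : AddMonoidAlgebra k ↥S) :
    scaleE c a = scaleF c a := rfl

lemma scaleF_scaleF (c d : ↥S → kˣ) (a : AddMonoidAlgebra k ↥S) :
    scaleF c (scaleF d a) = scaleF (fun s => c s * d s) a := by
  ext s; simp [mul_assoc]

lemma scaleF_mul (c : ↥S → kˣ) (hc : ∀ s t : ↥S, c (s + t) = c s * c t)
    (a b : AddMonoidAlgebra k ↥S) :
    scaleF c (a * b) = scaleF c a * scaleF c b := by
  induction a using AddMonoidAlgebra.induction_linear with
  | zero => simp [show scaleF c (0 : AddMonoidAlgebra k ↥S) = 0 by ext s; simp]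
  | add f g hf hg =>
      rw [add_mul, scaleF_add, hf, hg, scaleF_add, add_mul]
  | single p v =>
      induction b using AddMonoidAlgebra.induction_linear with
      | zero => simp [show scaleF c (0 : AddMonoidAlgebra k ↥S) = 0 by ext s; simp]
      | add f g hf hg =>
          rw [mul_add, scaleF_add, hf, hg, scaleF_add, mul_add]
      | single r w =>
          show scaleF c (AddMonoidAlgebra.single p v * AddMonoidAlgebra.single r w) = _
          rw [AddMonoidAlgebra.single_mul_single, scaleF_single, scaleF_single, scaleF_single,
            AddMonoidAlgebra.single_mul_single, hc]
          rw [Units.val_mul]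
          ring_nf

lemma betaq_add_left {q : Fin (n + 1) → Fin (n + 1) → kˣ} (s t u : Fin (n + 1) → ℤ) :
    betaq q (s + t) u = betaq q s u * betaq q t u := by
  unfold betaq
  rw [← Finset.prod_mul_distrib]
  refine Finset.prod_congr rfl fun i _ => ?_
  rw [← Finset.prod_mul_distrib]
  refine Finset.prod_congr rfl fun j _ => ?_
  split_ifs with h
  · rw [Pi.add_apply, add_mul, zpow_add]
  · rw [one_mul]

lemma betaq_add_right {q : Fin (n + 1) → Fin (n + 1) → kˣ} (s t u : Fin (n + 1) → ℤ) :
    betaq q s (t + u) = betaq q s t * betaq q s u := by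
  unfold betaq
  rw [← Finset.prod_mul_distrib]
  refine Finset.prod_congr rfl fun i _ => ?_
  rw [← Finset.prod_mul_distrib]
  refine Finset.prod_congr rfl fun j _ => ?_
  split_ifs with h
  · rw [Pi.add_apply, mul_add, zpow_add]
  · rw [one_mul]

end Aux

/-- An element of the monoid algebra `k[S]` is homogeneous of degree `g ∈ ℤ^{n+1}` if its
support lies in degree `g`. -/
def IsHomogOfDeg {k : Type*} [Field k] {n : ℕ} (S : AddSubmonoid (Fin (n + 1) → ℤ))
    (g : Fin (n + 1) → ℤ) (a : AddMonoidAlgebra k ↥S) : Prop :=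
  ∀ s ∈ a.coeff.support, (s : Fin (n + 1) → ℤ) = g

/-- Let `S ⊆ ℤ^{n+1}` be a finitely generated submonoid and `q` a multiplicatively
skew-symmetric matrix with entries in `kˣ`. Then there is a left twisting system `τ` on
the `ℤ^{n+1}`-graded algebra `k[S]` (a family of degree-preserving `k`-linear automorphisms
satisfying the left twisting relation) whose twisted product satisfies
`X^s ∘ X^t = β_q(s,t)·X^{s+t}` for all `s, t ∈ S`; that is, the twist of `k[S]` by `τ` is
the twisted semigroup algebra `k_q[S]`. -/
theorem monoidAlgebra_twist_to_kqS
    {k : Type*} [Field k] {n : ℕ} (S : AddSubmonoid (Fin (n + 1) → ℤ)) (hfg : S.FG)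
    (q : Fin (n + 1) → Fin (n + 1) → kˣ)
    (hq1 : ∀ i, q i i = 1) (hq2 : ∀ i j, q i j * q j i = 1) :
    ∃ τ : (Fin (n + 1) → ℤ) → (AddMonoidAlgebra k ↥S ≃ₗ[k] AddMonoidAlgebra k ↥S),
      (∀ (u g : Fin (n + 1) → ℤ) (a : AddMonoidAlgebra k ↥S),
        IsHomogOfDeg S g a → IsHomogOfDeg S g (τ u a)) ∧
      (∀ (g' g'' : Fin (n + 1) → ℤ) (a a' : AddMonoidAlgebra k ↥S),
        IsHomogOfDeg S g' a' → τ g'' (τ g' a * a') = τ (g' + g'') a * τ g'' a') ∧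
      (∀ s t : S,
        τ (t : Fin (n + 1) → ℤ) (AddMonoidAlgebra.single s (1 : k)) *
            AddMonoidAlgebra.single t (1 : k) =
          ((betaq q (s : Fin (n + 1) → ℤ) (t : Fin (n + 1) → ℤ) : kˣ) : k) •
            AddMonoidAlgebra.single (s + t) (1 : k)) := by
  classical
  refine ⟨fun u => scaleE (fun s => betaq q (s : Fin (n + 1) → ℤ) u), ?_, ?_, ?_⟩
  · intro u g a ha s hs
    exact ha s (by simpa using hs)
  · intro g' g'' a a' _
    have hc : ∀ s t : ↥S,
        betaq q ((s + t : ↥S) : Fin (n + 1) → ℤ) g''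
          = betaq q (s : Fin (n + 1) → ℤ) g'' * betaq q (t : Fin (n + 1) → ℤ) g'' := by
      intro s t
      rw [AddSubmonoid.coe_add, betaq_add_left]
    simp only [scaleE_apply]
    rw [scaleF_mul _ hc, scaleF_scaleF]
    have he : (fun s : ↥S => betaq q (s : Fin (n + 1) → ℤ) g'' * betaq q (s : Fin (n + 1) → ℤ) g')
        = fun s : ↥S => betaq q (s : Fin (n + 1) → ℤ) (g' + g'') :=
      funext fun s => by rw [mul_comm, ← betaq_add_right]
    rw [he]
  · intro s t
    simp only [scaleE_apply, scaleF_single, mul_one]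
    rw [AddMonoidAlgebra.single_mul_single]
    simp [AddMonoidAlgebra.smul_single']
end

section
/- Let S ⊆ ℤ^{n+1} be a normal submonoid which generates ℤ^{n+1} as a group and is generated as a monoid by elements s₁,…,s_l (with l ≥ n+1). Let λ : ℤ^{n+1} → ℤ be a group homomorphism with λ(s_i) ≥ 0 for all 1 ≤ i ≤ l. Suppose s₁,…,sₙ ∈ ker λ are ℤ-linearly independent, and λ(s_l) ≠ 0. Then {x ∈ ℤ^{n+1} : λ(x) ≥ 0} = ℤs₁ + … + ℤsₙ + ℕs_{n+1} + … + ℕs_l. -/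
lemma mem_closure_range_iff {M : Type*} [AddCommMonoid M] {l : ℕ} (s : Fin l → M) (x : M) :
    x ∈ AddSubmonoid.closure (Set.range s) ↔ ∃ b : Fin l → ℕ, x = ∑ i, b i • s i := by
  constructor
  · intro hx
    induction hx using AddSubmonoid.closure_induction with
    | mem y hy =>
      obtain ⟨i, rfl⟩ := hy
      refine ⟨fun j => if j = i then 1 else 0, ?_⟩
      simp [ite_smul, Finset.sum_ite_eq']
    | zero => exact ⟨0, by simp⟩
    | add y z hy hz hy' hz' =>
      obtain ⟨b, rfl⟩ := hy'
      obtain ⟨c, rfl⟩ := hz'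
      exact ⟨b + c, by simp [add_smul, Finset.sum_add_distrib]⟩
  · rintro ⟨b, rfl⟩
    exact sum_mem fun i _ =>
      AddSubmonoid.nsmul_mem _ (AddSubmonoid.subset_closure (Set.mem_range_self i)) _

lemma sum_nonneg_mem_closure {k l : ℕ} (s : Fin l → (Fin k → ℤ)) (e : Fin l → ℤ)
    (he : ∀ i, 0 ≤ e i) :
    (∑ i, e i • s i) ∈ AddSubmonoid.closure (Set.range s) := by
  refine sum_mem fun i _ => ?_
  rw [← Int.toNat_of_nonneg (he i), natCast_zsmul]
  exact AddSubmonoid.nsmul_mem _ (AddSubmonoid.subset_closure (Set.mem_range_self i)) _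

lemma aux_ker_multiple {n l : ℕ} (hl : n + 1 ≤ l) (s : Fin l → (Fin (n + 1) → ℤ))
    (lam : (Fin (n + 1) → ℤ) →+ ℤ)
    (hker : ∀ i : Fin l, (i : ℕ) < n → lam (s i) = 0)
    (hindep : LinearIndependent ℤ (fun i : Fin n => s (Fin.castLE (Nat.le_of_succ_le hl) i)))
    (hlast : lam (s ⟨l - 1, (Nat.sub_lt (Nat.lt_of_lt_of_le (Nat.succ_pos n) hl) Nat.one_pos)⟩) ≠ 0)
    (m : Fin (n + 1) → ℤ) (hm : lam m = 0) :
    ∃ q : ℕ, 1 ≤ q ∧ ∃ c : Fin l → ℤ, (∀ i : Fin l, n ≤ (i : ℕ) → c i = 0) ∧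
      (q : ℤ) • m = ∑ i : Fin l, c i • s i := by
  have hnl : n ≤ l := by omega
  set sF : Fin n → (Fin (n + 1) → ℤ) := fun i => s (Fin.castLE hnl i) with hsF
  set w : Fin (n + 2) → (Fin (n + 1) → ℤ) :=
    Fin.snoc (Fin.snoc sF m) (s ⟨l - 1, (Nat.sub_lt (Nat.lt_of_lt_of_le (Nat.succ_pos n) hl) Nat.one_pos)⟩) with hw
  have hnotLI : ¬ LinearIndependent ℤ w := by
    intro h
    have h2 := h.fintype_card_le_finrank
    rw [Module.finrank_pi] at h2
    simp [Fintype.card_fin] at h2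
  rw [Fintype.not_linearIndependent_iff] at hnotLI
  obtain ⟨g, hg0, i0, hi0⟩ := hnotLI
  rw [Fin.sum_univ_castSucc] at hg0
  simp only [hw, Fin.snoc_last, Fin.snoc_castSucc] at hg0
  rw [Fin.sum_univ_castSucc] at hg0
  simp only [Fin.snoc_last, Fin.snoc_castSucc] at hg0
  -- hg0 : ∑ i : Fin n, g i.castSucc.castSucc • sF i + g (Fin.last n).castSucc • m
  --        + g (Fin.last (n+1)) • s ⟨l-1,_⟩ = 0
  have hlam := congrArg lam hg0
  simp only [map_add, map_sum, map_zsmul, hm, smul_eq_mul, mul_zero, map_zero] at hlam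
  have hker' : ∀ i : Fin n, lam (sF i) = 0 := fun i => hker _ (by simp [Fin.coe_castLE, i.isLt])
  rw [Finset.sum_eq_zero (fun i _ => by rw [hker' i, mul_zero])] at hlam
  have hγ : g (Fin.last (n + 1)) = 0 := by
    rcases mul_eq_zero.1 (by linarith [hlam] : g (Fin.last (n+1)) * lam (s ⟨l-1, (Nat.sub_lt (Nat.lt_of_lt_of_le (Nat.succ_pos n) hl) Nat.one_pos)⟩) = 0) with h | h
    · exact h
    · exact absurd h hlast
  rw [hγ, zero_smul, add_zero] at hg0
  -- now case on β
  by_cases hβ : g (Fin.last n).castSucc = 0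
  · exfalso
    rw [hβ, zero_smul, add_zero] at hg0
    have hall := Fintype.linearIndependent_iff.1 hindep (fun i => g i.castSucc.castSucc) hg0
    -- every index of g is zero
    induction i0 using Fin.lastCases with
    | last => exact hi0 hγ
    | cast j =>
      induction j using Fin.lastCases with
      | last => exact hi0 hβ
      | cast k => exact hi0 (hall k)
  · have key : ∀ q : ℕ, (q:ℤ) = g (Fin.last n).castSucc ∨ (q:ℤ) = -(g (Fin.last n).castSucc) →
        True := fun _ _ => trivial
    set β := g (Fin.last n).castSucc with hβdef
    have hq1 : 1 ≤ β.natAbs := by omega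
    have hrel : β • m = -∑ i : Fin n, g i.castSucc.castSucc • sF i := by
      linear_combination (norm := module) hg0
    -- package coefficients on Fin l
    have conv : ∀ c : Fin n → ℤ, ∃ C : Fin l → ℤ, (∀ i : Fin l, n ≤ (i:ℕ) → C i = 0) ∧
        ∑ i : Fin l, C i • s i = ∑ i : Fin n, c i • sF i := by
      intro c
      refine ⟨fun j => if h : (j : ℕ) < n then c ⟨j, h⟩ else 0, fun i hi => dif_neg (by omega), ?_⟩
      have hstep : ∑ j ∈ Finset.univ.map (Fin.castLEEmb hnl),
          (if h : (j : ℕ) < n then c ⟨j, h⟩ else 0) • s j = ∑ i : Fin n, c i • sF i := by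
        rw [Finset.sum_map]
        refine Finset.sum_congr rfl fun i _ => ?_
        rw [dif_pos (by simp [i.isLt])]
        congr 1
      rw [← hstep]
      refine (Finset.sum_subset (Finset.subset_univ _) fun j _ hj => ?_).symm
      have h' : ¬ (j : ℕ) < n := fun h =>
        hj (Finset.mem_map.2 ⟨⟨j, h⟩, Finset.mem_univ _, by ext; simp⟩)
      simp only [h', dif_neg, not_false_iff, zero_smul]
    rcases Int.natAbs_eq β with h | h
    · obtain ⟨C, hC0, hCs⟩ := conv (fun i => -(g i.castSucc.castSucc))
      refine ⟨β.natAbs, hq1, C, hC0, ?_⟩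
      rw [hCs, show ((β.natAbs : ℤ)) = β by omega, hrel]
      simp [neg_smul, Finset.sum_neg_distrib]
    · obtain ⟨C, hC0, hCs⟩ := conv (fun i => g i.castSucc.castSucc)
      refine ⟨β.natAbs, hq1, C, hC0, ?_⟩
      rw [hCs, show ((β.natAbs : ℤ)) = -β by omega, neg_smul, hrel, neg_neg]


/-- Let `S ⊆ ℤ^{n+1}` be a normal submonoid which generates `ℤ^{n+1}` as a group and is
generated as a monoid by `s₁, …, s_l` (`l ≥ n+1`). Let `λ : ℤ^{n+1} → ℤ` be a group
homomorphism with `λ(sᵢ) ≥ 0` for all `i`. If `s₁, …, sₙ ∈ ker λ` are `ℤ`-linearly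
independent and `λ(s_l) ≠ 0`, then
`{x : λ(x) ≥ 0} = ℤs₁ + … + ℤsₙ + ℕs_{n+1} + … + ℕs_l`. -/
theorem halfspace_eq_mixed_span
    {n l : ℕ} (hl : n + 1 ≤ l) (s : Fin l → (Fin (n + 1) → ℤ))
    (hgen : AddSubgroup.closure
        ((AddSubmonoid.closure (Set.range s) : AddSubmonoid (Fin (n + 1) → ℤ)) :
          Set (Fin (n + 1) → ℤ)) = ⊤)
    (hnormal : ∀ (g : Fin (n + 1) → ℤ) (p : ℕ), 1 ≤ p →
        p • g ∈ AddSubmonoid.closure (Set.range s) → g ∈ AddSubmonoid.closure (Set.range s))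
    (lam : (Fin (n + 1) → ℤ) →+ ℤ)
    (hpos : ∀ i : Fin l, 0 ≤ lam (s i))
    (hker : ∀ i : Fin l, (i : ℕ) < n → lam (s i) = 0)
    (hindep : LinearIndependent ℤ (fun i : Fin n => s (Fin.castLE (by omega) i)))
    (hlast : lam (s ⟨l - 1, by omega⟩) ≠ 0) :
    ∀ x : Fin (n + 1) → ℤ, 0 ≤ lam x ↔
      ∃ a : Fin l → ℤ, (∀ i : Fin l, n ≤ (i : ℕ) → 0 ≤ a i) ∧ x = ∑ i : Fin l, a i • s i := by
  intro x
  constructor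
  · intro hx
    set L : Fin l := ⟨l - 1, by omega⟩ with hL
    set d : ℤ := lam (s L) with hd
    have hd0 : 0 < d := lt_of_le_of_ne (hpos _) (Ne.symm hlast)
    set m : Fin (n + 1) → ℤ := d • x - lam x • s L with hm
    have hmker : lam m = 0 := by
      simp only [hm, map_sub, map_zsmul, smul_eq_mul]
      ring
    obtain ⟨q, hq1, c, hc0, hqc⟩ := aux_ker_multiple hl s lam hker hindep hlast m hmker
    -- (q*d) • x = (q * lam x) • s L + ∑ c i • s i
    have hmain : ((q : ℤ) * d) • x = ((q : ℤ) * lam x) • s L + ∑ i : Fin l, c i • s i := by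
      rw [← hqc, hm]
      module
    set p : ℕ := q * d.toNat with hp
    have hpz : (p : ℤ) = (q : ℤ) * d := by
      rw [hp]
      push_cast [Int.toNat_of_nonneg hd0.le]
      ring
    have hp1 : 1 ≤ p := by
      have : 1 ≤ d.toNat := by omega
      exact Nat.one_le_iff_ne_zero.2 (by positivity)
    set N : ℕ := ∑ i, (c i).natAbs with hN
    have hcN : ∀ i : Fin l, 0 ≤ c i + (p : ℤ) * N := by
      intro i
      have h1 : (c i).natAbs ≤ N :=
        Finset.single_le_sum (f := fun j => (c j).natAbs) (fun j _ => Nat.zero_le _)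
          (Finset.mem_univ i)
      have h2 : (N : ℤ) ≤ (p : ℤ) * N := le_mul_of_one_le_left (by positivity) (by exact_mod_cast hp1)
      omega
    set T : Fin (n + 1) → ℤ := ∑ i ∈ Finset.univ.filter (fun i : Fin l => (i : ℕ) < n), s i with hT
    set e : Fin l → ℤ := fun i =>
      c i + (if (i : ℕ) < n then (p : ℤ) * N else 0) + (if i = L then (q : ℤ) * lam x else 0) with he
    have he0 : ∀ i, 0 ≤ e i := by
      intro i
      have h3 : 0 ≤ if i = L then (q : ℤ) * lam x else 0 := by
        split
        · positivity
        · exact le_refl _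
      by_cases h : (i : ℕ) < n
      · have h4 := hcN i
        simp only [he, if_pos h]
        linarith
      · have h4 := hc0 i (by omega)
        simp only [he, if_neg h, h4]
        linarith
    have hkey : (p : ℤ) • (x + (N : ℤ) • T) = ∑ i : Fin l, e i • s i := by
      have hsplit : ∑ i : Fin l, e i • s i = (∑ i : Fin l, c i • s i)
          + ((p : ℤ) * N) • T + ((q : ℤ) * lam x) • s L := by
        simp only [he, add_smul, Finset.sum_add_distrib, ite_smul, zero_smul]
        rw [Finset.sum_ite_eq' Finset.univ L fun i => ((q : ℤ) * lam x) • s i]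
        simp only [Finset.mem_univ, if_pos]
        rw [hT, Finset.smul_sum, ← Finset.sum_filter]
      rw [hsplit, smul_add, hpz, hmain, smul_smul]
      module
    have hmem : p • (x + (N : ℤ) • T) ∈ AddSubmonoid.closure (Set.range s) := by
      have h5 : p • (x + (N : ℤ) • T) = ∑ i : Fin l, e i • s i := by
        rw [← hkey]
        simp only [natCast_zsmul]
      rw [h5]
      exact sum_nonneg_mem_closure s e he0
    have hy := hnormal _ p hp1 hmem
    obtain ⟨b, hb⟩ := (mem_closure_range_iff s _).1 hy
    have hb' : x + (N : ℤ) • T = ∑ i : Fin l, (b i : ℤ) • s i := by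
      rw [hb]
      exact Finset.sum_congr rfl fun i _ => (natCast_zsmul (s i) (b i)).symm
    refine ⟨fun i => (b i : ℤ) - (if (i : ℕ) < n then (N : ℤ) else 0), ?_, ?_⟩
    · intro i hi
      simp [Nat.not_lt.2 hi, Int.natCast_nonneg]
    · have hx2 : x = (∑ i : Fin l, (b i : ℤ) • s i) - (N : ℤ) • T := by
        rw [← hb']
        module
      rw [hx2, hT, Finset.smul_sum, Finset.sum_filter, ← Finset.sum_sub_distrib]
      refine Finset.sum_congr rfl fun i _ => ?_
      by_cases h : (i : ℕ) < n <;> simp [h, sub_smul]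
  · rintro ⟨a, ha, rfl⟩
    rw [map_sum]
    refine Finset.sum_nonneg fun i _ => ?_
    rw [map_zsmul, smul_eq_mul]
    by_cases h : (i : ℕ) < n
    · rw [hker i h, mul_zero]
    · exact mul_nonneg (ha i (by omega)) (hpos i)
end

section
/- Let S be a normal submonoid of an abelian group G, and let s ∈ S. Then the submonoid S + ℤs = {x + m·s : x ∈ S, m ∈ ℤ} of G is normal. -/
/-- If `S` is a normal submonoid of an abelian group `G` and `s ∈ S`, then the submonoid
`S + ℤs = {x + m·s : x ∈ S, m ∈ ℤ}` of `G` is normal. -/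
theorem normal_submonoid_add_zmultiples
    {G : Type*} [AddCommGroup G] (S : AddSubmonoid G)
    (hnormal : ∀ (g : G) (p : ℕ), 1 ≤ p → p • g ∈ S → g ∈ S)
    (s : G) (hs : s ∈ S) :
    ∀ (g : G) (p : ℕ), 1 ≤ p →
      (∃ x ∈ S, ∃ m : ℤ, p • g = x + m • s) → ∃ x ∈ S, ∃ m : ℤ, g = x + m • s := by
  rintro g p hp ⟨x, hx, m, hm⟩
  have hp' : (0 : ℤ) < p := by exact_mod_cast hp
  set q := m / p with hq
  set r := m % p with hr
  have hr0 : 0 ≤ r := Int.emod_nonneg m (by omega)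
  have hdecomp : m = p * q + r := by exact (Int.mul_ediv_add_emod m (p:ℤ)).symm
  have key : (p : ℤ) • (g - q • s) = x + r • s := by
    have : (p : ℤ) • g = x + m • s := by
      rw [← hm]; norm_num
    rw [smul_sub, this, hdecomp, add_smul, mul_smul]
    abel
  have hrs : r • s ∈ S := by
    obtain ⟨n, hn⟩ := Int.eq_ofNat_of_zero_le hr0
    rw [hn, natCast_zsmul]
    exact AddSubmonoid.nsmul_mem S hs _
  have hmem : g - q • s ∈ S := by
    apply hnormal _ p hp
    have : p • (g - q • s) = (p : ℤ) • (g - q • s) := by norm_num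
    rw [this, key]
    exact S.add_mem hx hrs
  exact ⟨g - q • s, hmem, q, by abel⟩
end

section
/- Every element of str(Π) different from the identity may be written as the class of a product π₁·π₂·…·π_s with s ∈ ℕ, s ≥ 1, and π₁ ≤ π₂ ≤ … ≤ π_s in Π. -/
/-- The defining relations of the straightening semigroup: `α·β ∼ (α⊓β)·(α⊔β)`. -/
def strRel (L : Type*) [DistribLattice L] (x y : Multiset L) : Prop :=
  ∃ a b : L, x = {a, b} ∧ y = {a ⊓ b, a ⊔ b}

/-- The monoid congruence on the free commutative monoid `Multiset L` generated by the
straightening relations; the straightening semigroup `str(L)` is its quotient. -/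
def strCon (L : Type*) [DistribLattice L] : AddCon (Multiset L) :=
  addConGen (strRel L)

lemma strCon_swap {L : Type*} [DistribLattice L] (a b : L) (t : Multiset L) :
    strCon L (a ::ₘ b ::ₘ t) ((a ⊓ b) ::ₘ (a ⊔ b) ::ₘ t) := by
  have h : strCon L ({a, b} : Multiset L) ({a ⊓ b, a ⊔ b} : Multiset L) :=
    AddConGen.Rel.of _ _ ⟨a, b, rfl, rfl⟩
  have := (strCon L).add h ((strCon L).refl t)
  simpa [Multiset.insert_eq_cons] using this

/-- Insertion lemma: inserting `a` into a sorted word. -/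
lemma strCon_insert {L : Type*} [DistribLattice L] :
    ∀ (l : List L), l.Pairwise (· ≤ ·) → ∀ a : L,
      ∃ l' : List L, l'.Pairwise (· ≤ ·) ∧ l'.length = l.length + 1 ∧
        strCon L (a ::ₘ (↑l : Multiset L)) (↑l' : Multiset L) ∧
        ∀ c : L, c ≤ a → (∀ y ∈ l, c ≤ y) → ∀ x ∈ l', c ≤ x := by
  intro l
  induction l with
  | nil =>
    intro _ a
    exact ⟨[a], List.pairwise_singleton _ a, rfl, (strCon L).refl _, by
      intro c hca _ x hx; simp at hx; subst hx; exact hca⟩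
  | cons b rest ih =>
    intro hs a
    have hrest : rest.Pairwise (· ≤ ·) := hs.of_cons
    obtain ⟨l'', hs'', hlen'', hcon'', hlb''⟩ := ih hrest (a ⊔ b)
    refine ⟨(a ⊓ b) :: l'', ?_, by simp [hlen''], ?_, ?_⟩
    · refine List.pairwise_cons.2 ⟨?_, hs''⟩
      intro x hx
      refine hlb'' (a ⊓ b) (inf_le_left.trans le_sup_left) ?_ x hx
      intro y hy
      exact inf_le_right.trans ((List.pairwise_cons.1 hs).1 y hy)
    · have h1 : strCon L (a ::ₘ b ::ₘ (↑rest : Multiset L))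
          ((a ⊓ b) ::ₘ (a ⊔ b) ::ₘ (↑rest : Multiset L)) := strCon_swap a b _
      have h2 : strCon L ((a ⊓ b) ::ₘ (a ⊔ b) ::ₘ (↑rest : Multiset L))
          ((a ⊓ b) ::ₘ (↑l'' : Multiset L)) := by
        have := (strCon L).add ((strCon L).refl ({a ⊓ b} : Multiset L)) hcon''
        simpa [Multiset.singleton_add] using this
      simpa using (strCon L).trans h1 h2
    · intro c hca hcl x hx
      simp only [List.mem_cons] at hx
      rcases hx with rfl | hx
      · exact le_inf hca (hcl b (List.mem_cons_self))
      · exact hlb'' c (hca.trans le_sup_left)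
          (fun y hy => hcl y (List.mem_cons_of_mem b hy)) x hx

lemma strCon_sortedWord {L : Type*} [DistribLattice L] (m : Multiset L) :
    ∃ l : List L, l.Pairwise (· ≤ ·) ∧ l.length = Multiset.card m ∧
      strCon L m (↑l : Multiset L) := by
  induction m using Multiset.induction with
  | empty => exact ⟨[], List.Pairwise.nil, rfl, (strCon L).refl _⟩
  | cons a s ih =>
    obtain ⟨l, hsort, hlen, hcon⟩ := ih
    obtain ⟨l', hs', hlen', hcon', _⟩ := strCon_insert l hsort a
    refine ⟨l', hs', by simp [hlen', hlen], ?_⟩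
    have h1 : strCon L (a ::ₘ s) (a ::ₘ (↑l : Multiset L)) := by
      have := (strCon L).add ((strCon L).refl ({a} : Multiset L)) hcon
      simpa [Multiset.singleton_add] using this
    exact h1.trans hcon'

/-- Every element of `str(Π)` different from the identity is the class of a product
`π₁·…·π_s` with `s ≥ 1` and `π₁ ≤ … ≤ π_s` in `Π`. -/
theorem str_exists_sorted_word (L : Type*) [DistribLattice L] [Fintype L] :
    ∀ x : (strCon L).Quotient, x ≠ 0 →
      ∃ l : List L, l ≠ [] ∧ l.Pairwise (· ≤ ·) ∧ x = (strCon L).mk' (↑l : Multiset L) := by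
  intro x hx
  obtain ⟨m, rfl⟩ := AddCon.mk'_surjective x
  obtain ⟨l, hsort, hlen, hcon⟩ := strCon_sortedWord m
  refine ⟨l, ?_, hsort, ((AddCon.eq _).2 hcon)⟩
  intro hnil
  subst hnil
  simp at hlen
  apply hx
  rw [eq_comm, Multiset.card_eq_zero] at hlen
  subst hlen
  rfl
end

section
/- For every element a of str(Π) different from the identity, there exist a unique integer t ≥ 1 and a unique nondecreasing sequence π₁ ≤ π₂ ≤ … ≤ π_t of elements of Π such that a is the class of the product π₁·π₂·…·π_t. -/
attribute [local instance] Classical.propDecidable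

section Aux

variable {L : Type*} [DistribLattice L]

/-- Separation by sup-prime elements in a finite lattice. -/
theorem exists_supPrime_of_not_le [Fintype L] {x y : L} (h : ¬ x ≤ y) :
    ∃ j : L, SupPrime j ∧ j ≤ x ∧ ¬ j ≤ y := by
  classical
  set S : Finset L := Finset.univ.filter (fun z => z ≤ x ∧ ¬ z ≤ y) with hS
  have hxS : x ∈ S := by simp [hS, h]
  obtain ⟨m, hmS, hmin⟩ := S.exists_minimal ⟨x, hxS⟩
  have hm : m ≤ x ∧ ¬ m ≤ y := by simpa [hS] using hmS
  refine ⟨m, ?_, hm.1, hm.2⟩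
  rw [supPrime_iff_supIrred]
  constructor
  · intro hmm
    exact hm.2 (le_of_eq (le_antisymm (hmm inf_le_left) inf_le_right) |>.trans inf_le_right
      |> fun _ => (hmm (inf_le_left : m ⊓ y ≤ m)).antisymm inf_le_left ▸ inf_le_right)
  · intro b c hbc
    by_contra hne
    push_neg at hne
    have hb : b < m := lt_of_le_of_ne (hbc ▸ le_sup_left) hne.1
    have hc : c < m := lt_of_le_of_ne (hbc ▸ le_sup_right) hne.2
    have hby : b ≤ y := by
      by_contra hby
      exact (lt_irrefl b) (hb.trans_le (hmin (by simp [hS, hb.le.trans hm.1, hby]) hb.le))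
    have hcy : c ≤ y := by
      by_contra hcy
      exact (lt_irrefl c) (hc.trans_le (hmin (by simp [hS, hc.le.trans hm.1, hcy]) hc.le))
    exact hm.2 (hbc ▸ sup_le hby hcy)

theorem le_of_forall_supPrime [Fintype L] {x y : L}
    (h : ∀ j : L, SupPrime j → j ≤ x → j ≤ y) : x ≤ y := by
  by_contra hxy
  obtain ⟨j, hj, hjx, hjy⟩ := exists_supPrime_of_not_le hxy
  exact hjy (h j hj hjx)

/-- The invariant congruence: same cardinality and same number of elements above each
sup-prime element. -/
def invCon (L : Type*) [DistribLattice L] : AddCon (Multiset L) where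
  r x y := Multiset.card x = Multiset.card y ∧
    ∀ j : L, SupPrime j → x.countP (j ≤ ·) = y.countP (j ≤ ·)
  iseqv := by
    refine ⟨fun x => ⟨rfl, fun _ _ => rfl⟩, fun h => ⟨h.1.symm, fun j hj => (h.2 j hj).symm⟩,
      fun h h' => ⟨h.1.trans h'.1, fun j hj => (h.2 j hj).trans (h'.2 j hj)⟩⟩
  add' := by
    rintro w x y z ⟨h1, h2⟩ ⟨h1', h2'⟩
    refine ⟨by simp [h1, h1'], fun j hj => by simp [Multiset.countP_add, h2 j hj, h2' j hj]⟩

theorem strCon_le_invCon : strCon L ≤ invCon L := by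
  refine AddCon.addConGen_le.mpr ?_
  rintro x y ⟨a, b, rfl, rfl⟩
  constructor
  · simp [Multiset.insert_eq_cons]
  · intro j hj
    have e : ∀ x y : L, ({x, y} : Multiset L) = x ::ₘ y ::ₘ 0 := fun x y => rfl
    rw [e, e]
    simp only [Multiset.countP_cons, Multiset.countP_zero]
    by_cases ha : j ≤ a <;> by_cases hb : j ≤ b <;>
      simp [le_inf_iff, hj.le_sup, ha, hb]

theorem invCon_of_strCon {x y : Multiset L} (h : strCon L x y) : invCon L x y :=
  strCon_le_invCon h

/-- In a sorted list, the elements above `j` form a final segment; so membership above `j`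
at position `k` is determined by the count. -/
theorem sorted_le_get_iff (j : L) :
    ∀ (l : List L), l.Pairwise (· ≤ ·) → ∀ (k : ℕ) (hk : k < l.length),
      (j ≤ l.get ⟨k, hk⟩ ↔ l.length - k ≤ l.countP (fun x => decide (j ≤ x))) := by
  intro l
  induction l with
  | nil => intro _ k hk; simp at hk
  | cons a t ih =>
    intro hs k hk
    have hat : ∀ x ∈ t, a ≤ x := fun x hx => (List.pairwise_cons.mp hs).1 x hx
    have hts : t.Pairwise (· ≤ ·) := (List.pairwise_cons.mp hs).2
    have hcount : (a :: t).countP (fun x => decide (j ≤ x)) =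
        t.countP (fun x => decide (j ≤ x)) + (if j ≤ a then 1 else 0) := by
      simp [List.countP_cons]
    match k with
    | 0 =>
      simp only [List.get, List.length_cons, Nat.sub_zero]
      constructor
      · intro hja
        have : ∀ x ∈ t, j ≤ x := fun x hx => hja.trans (hat x hx)
        have ht : t.countP (fun x => decide (j ≤ x)) = t.length := by
          rw [List.countP_eq_length]
          intro x hx; simpa using this x hx
        rw [hcount, ht]
        simp [hja]
      · intro hlen
        by_contra hja
        have hlt : (a :: t).countP (fun x => decide (j ≤ x)) ≤ t.length := by
          rw [hcount]
          simp only [hja, if_false, Nat.add_zero]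
          exact List.countP_le_length
        omega
    | k + 1 =>
      have hk' : k < t.length := by simpa using hk
      have := ih hts k hk'
      simp only [List.get, List.length_cons]
      rw [show t.length + 1 - (k + 1) = t.length - k from by omega]
      by_cases hja : j ≤ a
      · have hjt : j ≤ t.get ⟨k, hk'⟩ := hja.trans (hat _ (t.get_mem _))
        have ht : t.countP (fun x => decide (j ≤ x)) = t.length := by
          rw [List.countP_eq_length]
          intro x hx
          simpa using hja.trans (hat x hx)
        constructor
        · intro _
          rw [hcount, ht]
          simp [hja]; omega
        · intro _; exact hjt
      · rw [hcount]
        simp only [hja, if_false, Nat.add_zero]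
        exact this

theorem countP_coe (p : L → Prop) [DecidablePred p] (l : List L) :
    (↑l : Multiset L).countP p = l.countP (fun x => decide (p x)) := by
  simp [Multiset.countP, Multiset.coe_countP]

/-- Uniqueness: two sorted lists related by the invariant congruence are equal. -/
theorem sorted_eq_of_invCon [Fintype L] {l l' : List L}
    (hl : l.Pairwise (· ≤ ·)) (hl' : l'.Pairwise (· ≤ ·))
    (h : invCon L (↑l : Multiset L) (↑l' : Multiset L)) : l = l' := by
  obtain ⟨hcard, hcount⟩ := h
  have hlen : l.length = l'.length := by simpa using hcard
  have hcnt : ∀ j : L, SupPrime j →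
      l.countP (fun x => decide (j ≤ x)) = l'.countP (fun x => decide (j ≤ x)) := by
    intro j hj
    have := hcount j hj
    rwa [countP_coe, countP_coe] at this
  apply List.ext_get hlen
  intro k hk hk'
  apply le_antisymm
  · apply le_of_forall_supPrime
    intro j hj hjl
    rw [sorted_le_get_iff j l hl k hk] at hjl
    rw [sorted_le_get_iff j l' hl' k hk']
    rw [← hcnt j hj, ← hlen]
    exact hjl
  · apply le_of_forall_supPrime
    intro j hj hjl
    rw [sorted_le_get_iff j l' hl' k hk'] at hjl
    rw [sorted_le_get_iff j l hl k hk]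
    rw [hcnt j hj, hlen]
    exact hjl

theorem strCon_pair (a b : L) :
    strCon L ({a, b} : Multiset L) ({a ⊓ b, a ⊔ b} : Multiset L) :=
  AddConGen.Rel.of _ _ ⟨a, b, rfl, rfl⟩

/-- Straightening: inserting an element into a sorted list. -/
theorem insert_sorted (a : L) :
    ∀ (l : List L), l.Pairwise (· ≤ ·) →
      ∃ m : List L, m.Pairwise (· ≤ ·) ∧ strCon L (a ::ₘ (↑l : Multiset L)) (↑m : Multiset L) ∧
        ∀ c : L, c ≤ a → (∀ x ∈ l, c ≤ x) → ∀ x ∈ m, c ≤ x := by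
  intro l
  induction l generalizing a with
  | nil =>
    intro _
    exact ⟨[a], List.pairwise_singleton _ a, by simpa using (strCon L).refl _, fun c hc _ x hx => by
      simp at hx; subst hx; exact hc⟩
  | cons b t ih =>
    intro hs
    have hbt : ∀ x ∈ t, b ≤ x := fun x hx => (List.pairwise_cons.mp hs).1 x hx
    have hts : t.Pairwise (· ≤ ·) := (List.pairwise_cons.mp hs).2
    obtain ⟨m', hm's, hm'c, hm'lb⟩ := ih (a ⊔ b) hts
    refine ⟨(a ⊓ b) :: m', ?_, ?_, ?_⟩
    · rw [List.pairwise_cons]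
      refine ⟨?_, hm's⟩
      intro x hx
      exact hm'lb (a ⊓ b) (inf_le_left.trans le_sup_left) (fun y hy => inf_le_right.trans (hbt y hy)) x hx
    · have step1 : strCon L (a ::ₘ b ::ₘ (↑t : Multiset L))
          ((a ⊓ b) ::ₘ (a ⊔ b) ::ₘ (↑t : Multiset L)) := by
        have : strCon L (({a, b} : Multiset L) + ↑t) (({a ⊓ b, a ⊔ b} : Multiset L) + ↑t) :=
          (strCon L).add (strCon_pair a b) ((strCon L).refl _)
        simpa [Multiset.insert_eq_cons, Multiset.cons_add] using this
      have step2 : strCon L ((a ⊓ b) ::ₘ (a ⊔ b) ::ₘ (↑t : Multiset L))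
          ((a ⊓ b) ::ₘ (↑m' : Multiset L)) := by
        have := (strCon L).add ((strCon L).refl ({a ⊓ b} : Multiset L)) hm'c
        simpa [Multiset.singleton_add] using this
      have : strCon L (a ::ₘ b ::ₘ (↑t : Multiset L)) ((a ⊓ b) ::ₘ (↑m' : Multiset L)) :=
        (strCon L).trans step1 step2
      simpa using this
    · intro c hca hcl x hx
      rcases List.mem_cons.mp hx with h | h
      · subst h
        exact le_inf hca (hcl b (by simp))
      · exact hm'lb c (le_sup_of_le_left hca) (fun y hy => hcl y (by simp [hy])) x h

/-- Existence: every multiset is congruent to a sorted list. -/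
theorem exists_sorted (s : Multiset L) :
    ∃ m : List L, m.Pairwise (· ≤ ·) ∧ strCon L s (↑m : Multiset L) := by
  induction s using Multiset.induction with
  | empty => exact ⟨[], List.Pairwise.nil, by simp [(strCon L).refl]⟩
  | cons a s ih =>
    obtain ⟨m, hms, hmc⟩ := ih
    obtain ⟨m', hm's, hm'c, _⟩ := insert_sorted a m hms
    refine ⟨m', hm's, ?_⟩
    have step1 : strCon L (a ::ₘ s) (a ::ₘ (↑m : Multiset L)) := by
      have := (strCon L).add ((strCon L).refl ({a} : Multiset L)) hmc
      simpa [Multiset.singleton_add] using this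
    exact (strCon L).trans step1 hm'c

end Aux

/-- Every element of `str(Π)` different from the identity is the class of a unique product
`π₁·…·π_t` with `t ≥ 1` and `π₁ ≤ … ≤ π_t` a nondecreasing sequence in `Π`. -/
theorem str_existsUnique_sorted_word (L : Type*) [DistribLattice L] [Fintype L] :
    ∀ x : (strCon L).Quotient, x ≠ 0 →
      ∃! l : List L, l ≠ [] ∧ l.Pairwise (· ≤ ·) ∧ x = (strCon L).mk' (↑l : Multiset L) := by
  intro x hx
  obtain ⟨s, rfl⟩ := AddCon.mk'_surjective x
  obtain ⟨m, hms, hmc⟩ := exists_sorted s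
  have hmk : (strCon L).mk' s = (strCon L).mk' (↑m : Multiset L) := by
    exact (AddCon.eq _).mpr hmc
  have hmne : m ≠ [] := by
    rintro rfl
    apply hx
    have h0 : invCon L s 0 := by simpa using invCon_of_strCon hmc
    have hs0 : s = 0 := by
      have := h0.1
      simpa using this
    simp [hs0, hmk]
  refine ⟨m, ⟨hmne, hms, hmk⟩, ?_⟩
  rintro l ⟨_, hls, hlmk⟩
  have : (strCon L).mk' (↑l : Multiset L) = (strCon L).mk' (↑m : Multiset L) := by
    rw [← hlmk, ← hmk]
  have hrel : strCon L (↑l : Multiset L) (↑m : Multiset L) := (AddCon.eq _).mp this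
  exact sorted_eq_of_invCon hls hms (invCon_of_strCon hrel)
end
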